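/- Let ψ be a normalized free N-partite state, and define the operator X_ψ on states by (X_ψ φ)(j) = ∑_{i} ∑_{l ∈ Fin (d i)} ρ⁽ⁱ⁾(ψ)_{j i, l} · φ(Function.update j i l) (the action of ∑ᵢ 1 ⊗ ⋯ ⊗ ρ⁽ⁱ⁾(ψ) ⊗ ⋯ ⊗ 1). Then for λ ∈ ℂ one has X_ψ ψ = λ ψ if and only if for every j ∈ supp(ψ): ∑_{i} ∑_{k ∈ supp(ψ), k i = j i} |ψ k|² = λ. -/

import Mathlib

open scoped BigOperators Classical

/-- The `i`-th reduced density matrix of an `N`-partite state `ψ`. -/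
noncomputable def rdm {N : ℕ} {d : Fin N → ℕ} (ψ : (∀ i, Fin (d i)) → ℂ) (i : Fin N) :
    Matrix (Fin (d i)) (Fin (d i)) ℂ :=
  fun k l => ∑ j : ∀ i', Fin (d i'),
    if j i = k then ψ j * (starRingEnd ℂ) (ψ (Function.update j i l)) else 0

/-- A state is free if any two distinct elements of its support differ in at least
two coordinates. -/
def IsFree {N : ℕ} {d : Fin N → ℕ} (ψ : (∀ i, Fin (d i)) → ℂ) : Prop :=
  ∀ j k : ∀ i, Fin (d i), ψ j ≠ 0 → ψ k ≠ 0 → j ≠ k →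
    ∃ i₁ i₂ : Fin N, i₁ ≠ i₂ ∧ j i₁ ≠ k i₁ ∧ j i₂ ≠ k i₂

lemma supp_update {N : ℕ} {d : Fin N → ℕ} {ψ : (∀ i, Fin (d i)) → ℂ}
    (hfree : IsFree ψ) {j : ∀ i, Fin (d i)} {i : Fin N} {l : Fin (d i)}
    (h1 : ψ j ≠ 0) (h2 : ψ (Function.update j i l) ≠ 0) : l = j i := by
  by_contra hne
  have hjk : j ≠ Function.update j i l := by
    intro h
    apply hne
    have := congrFun h i
    simpa using this.symm
  obtain ⟨i₁, i₂, h12, hn1, hn2⟩ := hfree j (Function.update j i l) h1 h2 hjk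
  have e1 : i₁ = i := by
    by_contra h; exact hn1 (by rw [Function.update_of_ne h])
  have e2 : i₂ = i := by
    by_contra h; exact hn2 (by rw [Function.update_of_ne h])
  exact h12 (e1.trans e2.symm)

lemma key {N : ℕ} {d : Fin N → ℕ} {ψ : (∀ i, Fin (d i)) → ℂ}
    (hfree : IsFree ψ) (j : ∀ i, Fin (d i)) :
    (∑ i : Fin N, ∑ l : Fin (d i), rdm ψ i (j i) l * ψ (Function.update j i l))
      = ((∑ i : Fin N, ∑ k : ∀ i', Fin (d i'),
            if ψ k ≠ 0 ∧ k i = j i then ‖ψ k‖ ^ 2 else 0 : ℝ) : ℂ) * ψ j := by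
  push_cast
  rw [Finset.sum_mul]
  refine Finset.sum_congr rfl (fun i _ => ?_)
  rw [Finset.sum_mul]
  simp only [rdm, Finset.sum_mul]
  -- per-i equality
  have claim : ∀ (l : Fin (d i)) (k : ∀ i', Fin (d i')),
      (if k i = j i then ψ k * (starRingEnd ℂ) (ψ (Function.update k i l)) else 0)
          * ψ (Function.update j i l)
        = if l = j i then
            (if ψ j ≠ 0 ∧ ψ k ≠ 0 ∧ k i = j i then
              ((‖ψ k‖ ^ 2 : ℝ) : ℂ) * ψ j else 0) else 0 := by
    intro l k
    by_cases hki : k i = j i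
    · rw [if_pos hki]
      by_cases hk : ψ k = 0
      · simp [hk]
      by_cases hl : l = j i
      · rw [if_pos hl]
        have hupk : Function.update k i l = k := by
          rw [hl, ← hki]; exact Function.update_eq_self i k
        have hupj : Function.update j i l = j := by
          rw [hl]; exact Function.update_eq_self i j
        rw [hupk, hupj]
        by_cases hj : ψ j = 0
        · simp [hj]
        · rw [if_pos ⟨hj, hk, hki⟩]
          have hc : ψ k * (starRingEnd ℂ) (ψ k) = ((‖ψ k‖ ^ 2 : ℝ) : ℂ) := by
            rw [Complex.mul_conj, Complex.normSq_eq_norm_sq]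
          rw [hc]
      · rw [if_neg hl]
        by_cases hjl : ψ (Function.update j i l) = 0
        · rw [hjl, mul_zero]
        by_cases hkl : ψ (Function.update k i l) = 0
        · rw [hkl]; simp
        -- derive contradiction: k and update k i l both in supp
        exfalso
        have := supp_update hfree hk hkl
        exact hl (this.trans hki)
    · simp [hki]
  calc ∑ l : Fin (d i), ∑ k : ∀ i', Fin (d i'),
        (if k i = j i then ψ k * (starRingEnd ℂ) (ψ (Function.update k i l)) else 0)
          * ψ (Function.update j i l)
      = ∑ l : Fin (d i), ∑ k : ∀ i', Fin (d i'),
          (if l = j i then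
            (if ψ j ≠ 0 ∧ ψ k ≠ 0 ∧ k i = j i then
              ((‖ψ k‖ ^ 2 : ℝ) : ℂ) * ψ j else 0) else 0) := by
        exact Finset.sum_congr rfl fun l _ => Finset.sum_congr rfl fun k _ => claim l k
    _ = ∑ k : ∀ i', Fin (d i'),
          (if ψ j ≠ 0 ∧ ψ k ≠ 0 ∧ k i = j i then
            ((‖ψ k‖ ^ 2 : ℝ) : ℂ) * ψ j else 0) := by
        rw [Finset.sum_comm]
        refine Finset.sum_congr rfl fun k _ => ?_
        simp
    _ = ∑ k : ∀ i', Fin (d i'),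
          ((if ψ k ≠ 0 ∧ k i = j i then (‖ψ k‖ ^ 2 : ℝ) else 0 : ℝ) : ℂ) * ψ j := by
        refine Finset.sum_congr rfl fun k _ => ?_
        rw [apply_ite (fun x : ℝ => (x : ℂ))]
        by_cases hj : ψ j = 0
        · simp [hj]
        · by_cases hQ : ψ k ≠ 0 ∧ k i = j i
          · rw [if_pos ⟨hj, hQ⟩, if_pos hQ]
          · rw [if_neg (by tauto), if_neg hQ]
            norm_num

/-- Criterion for a normalized free state to be an eigenvector of
`X_ψ = ∑ᵢ 1 ⊗ ⋯ ⊗ ρ⁽ⁱ⁾(ψ) ⊗ ⋯ ⊗ 1`. -/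
theorem free_eigenvector_iff {N : ℕ} {d : Fin N → ℕ} (hd : ∀ i, 1 ≤ d i)
    (ψ : (∀ i, Fin (d i)) → ℂ)
    (hnorm : ∑ j : ∀ i, Fin (d i), ‖ψ j‖ ^ 2 = 1)
    (hfree : IsFree ψ) (lam : ℂ) :
    (∀ j : ∀ i, Fin (d i),
        (∑ i : Fin N, ∑ l : Fin (d i), rdm ψ i (j i) l * ψ (Function.update j i l))
          = lam * ψ j) ↔
    (∀ j : ∀ i, Fin (d i), ψ j ≠ 0 →
        ((∑ i : Fin N, ∑ k : ∀ i', Fin (d i'),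
            if ψ k ≠ 0 ∧ k i = j i then ‖ψ k‖ ^ 2 else 0 : ℝ) : ℂ) = lam) := by
  constructor
  · intro hX j hj
    have h := hX j
    rw [key hfree j] at h
    exact mul_right_cancel₀ hj h
  · intro h j
    rw [key hfree j]
    by_cases hj : ψ j = 0
    · simp [hj]
    · rw [h j hj]
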